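/- With the notation of the recursive Wick difference system, the difference between the discrete Wick power and its Euler counterpart has Walsh decomposition (1/k!)(B^{H,n}_{l/n})^{⋄ₙ k} − (1/k!)U^{k,n}_l = Σ_{C⊆{1,…,l},|C|=k} (Σ_{m:C→{1,…,l} not injective} ∏_{p∈C} d^n_{m(p),p}) Ξ^n_C; the key identity is that Σ over all maps m:C→{1,…,l} of ∏_{p∈C} d^n_{m(p),p} equals b^n_{l/n,C} because each coordinate sum telescopes: Σ_{m=1}^l d^n_{m,p} = b^n_{l/n,p}. -/

import Mathlib

open Finset
open scoped Classical

/-- The discrete Wick product on Walsh coefficients. -/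
noncomputable def wickProd {n : ℕ} (x y : Finset (Fin n) → ℝ) : Finset (Fin n) → ℝ :=
  fun C => ∑ A : Finset (Fin n), ∑ B : Finset (Fin n),
    if A ∪ B = C ∧ Disjoint A B then x A * y B else 0

/-- Iterated discrete Wick powers on Walsh coefficients. -/
noncomputable def wickPowC {n : ℕ} (x : Finset (Fin n) → ℝ) : ℕ → Finset (Fin n) → ℝ
  | 0 => fun C => if C = ∅ then 1 else 0
  | k + 1 => wickProd (wickPowC x k) x

/-- Walsh coefficients of the walk `B^{H,n}_{l/n} = Σ_{i=1}^{l} b_i ξ_i`. -/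
noncomputable def walkC {n : ℕ} (b : Fin n → ℝ) (l : ℕ) : Finset (Fin n) → ℝ :=
  fun C => ∑ i : Fin n, if C = {i} ∧ (i : ℕ) < l then b i else 0

/-- Walsh coefficients of the increment `Σ_i d^n_{l,i} ξ_i`. -/
noncomputable def deltaC {n : ℕ} (d : ℕ → Fin n → ℝ) (l : ℕ) : Finset (Fin n) → ℝ :=
  fun C => ∑ i : Fin n, if C = {i} then d l i else 0

/-- Walsh coefficients of the Euler scheme `U^{k,n}_l` (`Ueuler d l k` is `U^{k,n}_l`). -/
noncomputable def Ueuler {n : ℕ} (d : ℕ → Fin n → ℝ) : ℕ → ℕ → Finset (Fin n) → ℝ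
  | 0 => fun k C => if k = 0 then (if C = ∅ then 1 else 0) else 0
  | l + 1 => fun k C =>
      match k with
      | 0 => if C = ∅ then 1 else 0
      | k + 1 =>
          Ueuler d l (k + 1) C +
            ((k : ℝ) + 1) * wickProd (Ueuler d l k) (deltaC d (l + 1)) C

noncomputable def lin {n : ℕ} (c : Fin n → ℝ) : Finset (Fin n) → ℝ :=
  fun C => ∑ i : Fin n, if C = {i} then c i else 0

lemma wickProd_lin {n : ℕ} (y : Finset (Fin n) → ℝ) (c : Fin n → ℝ) (C : Finset (Fin n)) :
    wickProd y (lin c) C = ∑ i ∈ C, y (C.erase i) * c i := by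
  classical
  unfold wickProd lin
  have step1 : ∀ A B : Finset (Fin n),
      (if A ∪ B = C ∧ Disjoint A B then y A * ∑ i : Fin n, (if B = {i} then c i else 0) else 0)
        = ∑ i : Fin n, if B = {i} then (if A ∪ {i} = C ∧ Disjoint A {i} then y A * c i else 0) else 0 := by
    intro A B
    split_ifs with h
    · rw [mul_sum]
      refine Finset.sum_congr rfl fun i _ => ?_
      by_cases hB : B = {i}
      · subst hB; simp [h]
      · simp [hB]
    · refine (Finset.sum_eq_zero fun i _ => ?_).symm
      by_cases hB : B = {i}
      · subst hB; rw [if_pos rfl, if_neg h]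
      · simp [hB]
  simp only [step1]
  have step2 : ∀ A : Finset (Fin n),
      (∑ B : Finset (Fin n), ∑ i : Fin n, if B = {i} then (if A ∪ {i} = C ∧ Disjoint A {i} then y A * c i else 0) else 0)
        = ∑ i : Fin n, if A ∪ {i} = C ∧ Disjoint A {i} then y A * c i else 0 := by
    intro A
    rw [Finset.sum_comm]
    refine Finset.sum_congr rfl fun i _ => ?_
    simp [Finset.sum_ite_eq']
  simp only [step2]
  rw [Finset.sum_comm]
  have key : ∀ (i : Fin n) (A : Finset (Fin n)),
      (A ∪ {i} = C ∧ Disjoint A {i}) ↔ (A = C.erase i ∧ i ∈ C) := by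
    intro i A
    rw [Finset.union_comm, ← Finset.insert_eq, Finset.disjoint_singleton_right]
    constructor
    · rintro ⟨h1, h2⟩
      refine ⟨by rw [← h1, Finset.erase_insert h2], by rw [← h1]; exact Finset.mem_insert_self i A⟩
    · rintro ⟨h1, h2⟩
      subst h1
      exact ⟨Finset.insert_erase h2, Finset.notMem_erase i C⟩
  have step3 : ∀ i : Fin n,
      (∑ A : Finset (Fin n), if A ∪ {i} = C ∧ Disjoint A {i} then y A * c i else 0)
        = if i ∈ C then y (C.erase i) * c i else 0 := by
    intro i
    have : ∀ A : Finset (Fin n),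
        (if A ∪ {i} = C ∧ Disjoint A {i} then y A * c i else 0)
          = if A = C.erase i then (if i ∈ C then y A * c i else 0) else 0 := by
      intro A
      by_cases hA : A = C.erase i
      · by_cases hiC : i ∈ C
        · rw [if_pos ((key i A).2 ⟨hA, hiC⟩), if_pos hA, if_pos hiC]
        · rw [if_neg (fun h => hiC ((key i A).1 h).2), if_pos hA, if_neg hiC]
      · rw [if_neg (fun h => hA ((key i A).1 h).1), if_neg hA]
    simp only [this]
    rw [Finset.sum_ite_eq' Finset.univ (C.erase i)]
    simp
  simp only [step3]
  rw [← Finset.sum_filter]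
  refine Finset.sum_congr ?_ (fun _ _ => rfl)
  simp [Finset.filter_mem_eq_inter]

lemma wickPowC_lin {n : ℕ} (c : Fin n → ℝ) (k : ℕ) (C : Finset (Fin n)) :
    wickPowC (lin c) k C = if C.card = k then (k.factorial : ℝ) * ∏ p ∈ C, c p else 0 := by
  induction k generalizing C with
  | zero =>
    by_cases h : C = ∅ <;> simp [wickPowC, h, Finset.card_eq_zero]
  | succ k ih =>
    show wickProd (wickPowC (lin c) k) (lin c) C = _
    rw [wickProd_lin]
    simp only [ih]
    by_cases hC : C.card = k + 1
    · rw [if_pos hC]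
      have hterm : ∀ i ∈ C,
          (if (C.erase i).card = k then (k.factorial : ℝ) * ∏ p ∈ C.erase i, c p else 0) * c i
            = (k.factorial : ℝ) * ∏ p ∈ C, c p := by
        intro i hi
        rw [if_pos (by rw [Finset.card_erase_of_mem hi, hC]; rfl)]
        rw [mul_assoc, mul_comm (∏ p ∈ C.erase i, c p) (c i), Finset.mul_prod_erase C c hi]
      rw [Finset.sum_congr rfl hterm, Finset.sum_const, hC]
      rw [nsmul_eq_mul, Nat.factorial_succ]
      push_cast
      ring
    · rw [if_neg hC]
      refine Finset.sum_eq_zero fun i hi => ?_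
      rw [if_neg, zero_mul]
      rw [Finset.card_erase_of_mem hi]
      intro h
      refine hC ?_
      have hpos : 0 < C.card := Finset.card_pos.2 ⟨i, hi⟩
      omega

lemma walkC_eq_lin {n : ℕ} (b : Fin n → ℝ) (l : ℕ) :
    walkC b l = lin (fun i => if (i : ℕ) < l then b i else 0) := by
  funext C
  refine Finset.sum_congr rfl fun i _ => ?_
  by_cases h1 : C = {i} <;> by_cases h2 : (i : ℕ) < l <;> simp [h1, h2]

lemma deltaC_eq_lin {n : ℕ} (d : ℕ → Fin n → ℝ) (l : ℕ) : deltaC d l = lin (d l) := rfl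

lemma sum_pi_eq {n : ℕ} (C : Finset (Fin n)) (t : Finset ℕ) (F : (∀ a ∈ C, ℕ) → ℝ) :
    ∑ m ∈ C.pi (fun _ => t), F m
      = ∑ f ∈ Fintype.piFinset (fun i => if i ∈ C then t else ({0} : Finset ℕ)),
          F (fun a _ => f a) := by
  classical
  refine Finset.sum_nbij' (fun m i => if h : i ∈ C then m i h else 0)
    (fun f => fun a _ => f a) ?_ ?_ ?_ ?_ ?_
  · intro m hm
    rw [Fintype.mem_piFinset]
    intro i
    by_cases h : i ∈ C
    · rw [dif_pos h, if_pos h]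
      exact Finset.mem_pi.1 hm i h
    · rw [dif_neg h, if_neg h]
      exact Finset.mem_singleton_self 0
  · intro f hf
    rw [Finset.mem_pi]
    intro a ha
    have := Fintype.mem_piFinset.1 hf a
    rwa [if_pos ha] at this
  · intro m _
    funext a ha
    dsimp only
    exact dif_pos ha
  · intro f hf
    funext i
    dsimp only
    by_cases h : i ∈ C
    · exact dif_pos h
    · rw [dif_neg h]
      have := Fintype.mem_piFinset.1 hf i
      rw [if_neg h] at this
      exact (Finset.mem_singleton.1 this).symm
  · intro m _
    congr 1
    funext a ha
    exact (dif_pos ha).symm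

noncomputable def pifun {n : ℕ} (C : Finset (Fin n)) (t : Finset ℕ) : Finset (Fin n → ℕ) :=
  Fintype.piFinset (fun i => if i ∈ C then t else ({0} : Finset ℕ))

noncomputable def Stot {n : ℕ} (d : ℕ → Fin n → ℝ) (l : ℕ) (C : Finset (Fin n)) : ℝ :=
  ∑ f ∈ pifun C (Finset.Icc 1 l), if Set.InjOn f ↑C then ∏ p ∈ C, d (f p) p else 0

lemma Stot_empty {n : ℕ} (d : ℕ → Fin n → ℝ) (l : ℕ) : Stot d l (∅ : Finset (Fin n)) = 1 := by
  classical
  unfold Stot pifun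
  have h1 : ∀ f ∈ Fintype.piFinset (fun i : Fin n => if i ∈ (∅ : Finset (Fin n)) then Finset.Icc 1 l else ({0} : Finset ℕ)),
      (if Set.InjOn f ↑(∅ : Finset (Fin n)) then ∏ p ∈ (∅ : Finset (Fin n)), d (f p) p else 0) = 1 := by
    intro f _
    rw [if_pos]
    · simp
    · simp [Set.InjOn]
  rw [Finset.sum_congr rfl h1, Finset.sum_const, Fintype.card_piFinset]
  simp

lemma Stot_zero {n : ℕ} (d : ℕ → Fin n → ℝ) (C : Finset (Fin n)) (hC : C.Nonempty) :
    Stot d 0 C = 0 := by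
  classical
  obtain ⟨i, hi⟩ := hC
  unfold Stot pifun
  rw [Finset.sum_eq_zero]
  intro f hf
  have := Fintype.mem_piFinset.1 hf i
  rw [if_pos hi] at this
  simp at this

lemma fiber_sum {n : ℕ} (d : ℕ → Fin n → ℝ) (l : ℕ) (C : Finset (Fin n)) (i : Fin n)
    (hi : i ∈ C) :
    ∑ f ∈ (pifun C (Finset.Icc 1 (l+1))).filter
        (fun f => Set.InjOn f ↑C ∧ f i = l + 1), ∏ p ∈ C, d (f p) p
      = Stot d l (C.erase i) * d (l+1) i := by
  classical
  unfold Stot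
  rw [← Finset.sum_filter, Finset.sum_mul]
  refine Finset.sum_nbij' (fun f => Function.update f i 0) (fun g => Function.update g i (l+1))
    ?_ ?_ ?_ ?_ ?_
  · intro f hf
    rw [Finset.mem_filter] at hf ⊢
    have hfp := hf.1
    have hinj := hf.2.1
    have hfi := hf.2.2
    constructor
    · rw [pifun, Fintype.mem_piFinset]
      intro j
      by_cases hj : j = i
      · subst hj
        rw [Function.update_self, if_neg (Finset.notMem_erase j C)]
        exact Finset.mem_singleton_self 0
      · rw [Function.update_of_ne hj]
        have hm := Fintype.mem_piFinset.1 hfp j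
        by_cases hjC : j ∈ C
        · rw [if_pos hjC, Finset.mem_Icc] at hm
          rw [if_pos (Finset.mem_erase.2 ⟨hj, hjC⟩), Finset.mem_Icc]
          refine ⟨hm.1, ?_⟩
          have hne : f j ≠ l + 1 := fun h => hj (hinj (Finset.mem_coe.2 hjC) (Finset.mem_coe.2 hi) (h.trans hfi.symm))
          omega
        · rw [if_neg hjC] at hm
          rw [if_neg (fun h => hjC (Finset.mem_of_mem_erase h))]
          exact hm
    · intro p hp q hq hpq
      have hp' : p ∈ C.erase i := hp
      have hq' : q ∈ C.erase i := hq
      rw [Function.update_of_ne (Finset.ne_of_mem_erase hp'),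
        Function.update_of_ne (Finset.ne_of_mem_erase hq')] at hpq
      exact hinj (Finset.mem_coe.2 (Finset.mem_of_mem_erase hp'))
        (Finset.mem_coe.2 (Finset.mem_of_mem_erase hq')) hpq
  · intro g hg
    rw [Finset.mem_filter] at hg ⊢
    obtain ⟨hgp, hinj⟩ := hg
    have hgval : ∀ j ∈ C.erase i, g j ∈ Finset.Icc 1 l := by
      intro j hj
      have := Fintype.mem_piFinset.1 hgp j
      rwa [if_pos hj] at this
    refine ⟨?_, ?_, Function.update_self i (l+1) g⟩
    · rw [pifun, Fintype.mem_piFinset]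
      intro j
      by_cases hj : j = i
      · subst hj
        rw [Function.update_self, if_pos hi, Finset.mem_Icc]
        omega
      · rw [Function.update_of_ne hj]
        by_cases hjC : j ∈ C
        · have := hgval j (Finset.mem_erase.2 ⟨hj, hjC⟩)
          rw [if_pos hjC, Finset.mem_Icc]
          rw [Finset.mem_Icc] at this
          omega
        · have := Fintype.mem_piFinset.1 hgp j
          rw [if_neg (fun h => hjC (Finset.mem_of_mem_erase h))] at this
          rwa [if_neg hjC]
    · intro p hp q hq hpq
      by_cases hpi : p = i <;> by_cases hqi : q = i
      · rw [hpi, hqi]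
      · exfalso
        rw [hpi, Function.update_self, Function.update_of_ne hqi] at hpq
        have := hgval q (Finset.mem_erase.2 ⟨hqi, Finset.mem_coe.1 hq⟩)
        rw [Finset.mem_Icc] at this
        omega
      · exfalso
        rw [hqi, Function.update_self, Function.update_of_ne hpi] at hpq
        have := hgval p (Finset.mem_erase.2 ⟨hpi, Finset.mem_coe.1 hp⟩)
        rw [Finset.mem_Icc] at this
        omega
      · rw [Function.update_of_ne hpi, Function.update_of_ne hqi] at hpq
        exact hinj (Finset.mem_coe.2 (Finset.mem_erase.2 ⟨hpi, Finset.mem_coe.1 hp⟩))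
          (Finset.mem_coe.2 (Finset.mem_erase.2 ⟨hqi, Finset.mem_coe.1 hq⟩)) hpq
  · intro f hf
    rw [Finset.mem_filter] at hf
    rw [Function.update_idem]
    rw [← hf.2.2]
    exact Function.update_eq_self i f
  · intro g hg
    rw [Finset.mem_filter] at hg
    rw [Function.update_idem]
    have : g i = 0 := by
      have := Fintype.mem_piFinset.1 hg.1 i
      rw [if_neg (Finset.notMem_erase i C)] at this
      exact Finset.mem_singleton.1 this
    rw [← this]
    exact Function.update_eq_self i g
  · intro f hf
    rw [Finset.mem_filter] at hf
    rw [← Finset.mul_prod_erase C (fun p => d (f p) p) hi, hf.2.2, mul_comm]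
    congr 1
    refine Finset.prod_congr rfl fun p hp => ?_
    rw [Function.update_of_ne (Finset.ne_of_mem_erase hp)]

lemma Stot_succ {n : ℕ} (d : ℕ → Fin n → ℝ) (l : ℕ) (C : Finset (Fin n)) :
    Stot d (l+1) C = Stot d l C + ∑ i ∈ C, Stot d l (C.erase i) * d (l+1) i := by
  classical
  have hsplit := Finset.sum_filter_add_sum_filter_not (pifun C (Finset.Icc 1 (l+1)))
    (fun f => ∀ p ∈ C, f p ≤ l)
    (fun f => if Set.InjOn f ↑C then ∏ p ∈ C, d (f p) p else 0)
  rw [Stot, ← hsplit]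
  congr 1
  · -- first part equals Stot d l C
    have hfe : (pifun C (Finset.Icc 1 (l+1))).filter (fun f => ∀ p ∈ C, f p ≤ l)
        = pifun C (Finset.Icc 1 l) := by
      ext f
      rw [Finset.mem_filter, pifun, pifun, Fintype.mem_piFinset, Fintype.mem_piFinset]
      constructor
      · rintro ⟨h1, h2⟩ i
        by_cases hiC : i ∈ C
        · have := h1 i
          rw [if_pos hiC, Finset.mem_Icc] at this
          rw [if_pos hiC, Finset.mem_Icc]
          exact ⟨this.1, h2 i hiC⟩
        · have := h1 i
          rwa [if_neg hiC] at this ⊢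
      · intro h1
        constructor
        · intro i
          by_cases hiC : i ∈ C
          · have := h1 i
            rw [if_pos hiC, Finset.mem_Icc] at this
            rw [if_pos hiC, Finset.mem_Icc]
            omega
          · have := h1 i
            rwa [if_neg hiC] at this ⊢
        · intro p hp
          have := h1 p
          rw [if_pos hp, Finset.mem_Icc] at this
          exact this.2
    rw [hfe]
    rfl
  · -- second part
    rw [← Finset.sum_filter]
    have hbU : ((pifun C (Finset.Icc 1 (l+1))).filter (fun f => ¬ ∀ p ∈ C, f p ≤ l)).filter
          (fun f => Set.InjOn f ↑C)
        = C.biUnion (fun i => (pifun C (Finset.Icc 1 (l+1))).filter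
            (fun f => Set.InjOn f ↑C ∧ f i = l + 1)) := by
      ext f
      simp only [Finset.mem_filter, Finset.mem_biUnion]
      constructor
      · rintro ⟨⟨hfp, hnle⟩, hinj⟩
        push_neg at hnle
        obtain ⟨p, hpC, hpl⟩ := hnle
        have := Fintype.mem_piFinset.1 hfp p
        rw [if_pos hpC, Finset.mem_Icc] at this
        exact ⟨p, hpC, hfp, hinj, by omega⟩
      · rintro ⟨i, hiC, hfp, hinj, hfi⟩
        refine ⟨⟨hfp, ?_⟩, hinj⟩
        push_neg
        exact ⟨i, hiC, by omega⟩
    rw [hbU, Finset.sum_biUnion, Finset.sum_congr rfl (fun i hi => fiber_sum d l C i hi)]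
    -- disjointness
    intro p hp q hq hpq
    simp only [Function.onFun]
    rw [Finset.disjoint_left]
    intro f hf1 hf2
    rw [Finset.mem_filter] at hf1 hf2
    exact hpq (hf1.2.1 (Finset.mem_coe.2 hp) (Finset.mem_coe.2 hq) (hf1.2.2.trans hf2.2.2.symm))

lemma sum_pifun_prod {n : ℕ} (d : ℕ → Fin n → ℝ) (l : ℕ) (C : Finset (Fin n)) :
    ∑ f ∈ pifun C (Finset.Icc 1 l), ∏ p ∈ C, d (f p) p
      = ∏ p ∈ C, ∑ m ∈ Finset.Icc 1 l, d m p := by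
  classical
  rw [Finset.prod_sum C (fun _ => Finset.Icc 1 l) (fun p m => d m p)]
  rw [sum_pi_eq C (Finset.Icc 1 l) (fun m => ∏ x ∈ C.attach, d (m x.1 x.2) x.1)]
  refine Finset.sum_congr rfl fun f _ => ?_
  rw [← Finset.prod_attach C (fun p => d (f p) p)]

lemma Ueuler_eq {n : ℕ} (d : ℕ → Fin n → ℝ) (l k : ℕ) (C : Finset (Fin n)) :
    Ueuler d l k C = if C.card = k then (k.factorial : ℝ) * Stot d l C else 0 := by
  classical
  induction l generalizing k C with
  | zero =>
    show (if k = 0 then (if C = ∅ then 1 else 0) else 0) = _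
    rcases k with _ | k
    · by_cases hC : C = ∅
      · subst hC; simp [Stot_empty]
      · rw [if_pos rfl, if_neg hC, if_neg (by simpa [Finset.card_eq_zero] using hC)]
    · rw [if_neg (Nat.succ_ne_zero k)]
      by_cases hC : C.card = k + 1
      · rw [if_pos hC, Stot_zero d C (Finset.card_pos.1 (by omega)), mul_zero]
      · rw [if_neg hC]
  | succ l ih =>
    rcases k with _ | k
    · show (if C = ∅ then (1:ℝ) else 0) = _
      by_cases hC : C = ∅
      · subst hC; simp [Stot_empty]
      · rw [if_neg hC, if_neg (by simpa [Finset.card_eq_zero] using hC)]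
    · show Ueuler d l (k + 1) C + ((k : ℝ) + 1) * wickProd (Ueuler d l k) (deltaC d (l + 1)) C = _
      rw [deltaC_eq_lin, wickProd_lin, ih]
      have hterm : ∀ i ∈ C, Ueuler d l k (C.erase i) * d (l+1) i
          = (if (C.erase i).card = k then (k.factorial : ℝ) * Stot d l (C.erase i) else 0) * d (l+1) i := by
        intro i _
        rw [ih]
      rw [Finset.sum_congr rfl hterm]
      by_cases hC : C.card = k + 1
      · rw [if_pos hC, if_pos hC]
        have hterm2 : ∀ i ∈ C,
            (if (C.erase i).card = k then (k.factorial : ℝ) * Stot d l (C.erase i) else 0) * d (l+1) i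
              = (k.factorial : ℝ) * (Stot d l (C.erase i) * d (l+1) i) := by
          intro i hi
          rw [if_pos (by rw [Finset.card_erase_of_mem hi, hC]; rfl), mul_assoc]
        rw [Finset.sum_congr rfl hterm2, ← Finset.mul_sum, Stot_succ]
        rw [Nat.factorial_succ]
        push_cast
        ring
      · rw [if_neg hC, if_neg hC, zero_add]
        have hterm2 : ∀ i ∈ C,
            (if (C.erase i).card = k then (k.factorial : ℝ) * Stot d l (C.erase i) else 0) * d (l+1) i = 0 := by
          intro i hi
          rw [if_neg, zero_mul]
          rw [Finset.card_erase_of_mem hi]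
          intro h
          have hpos : 0 < C.card := Finset.card_pos.2 ⟨i, hi⟩
          omega
        rw [Finset.sum_congr rfl hterm2, Finset.sum_const, smul_zero, mul_zero]

lemma telescope {n : ℕ} (b : ℕ → Fin n → ℝ) (hb0 : ∀ i : Fin n, b 0 i = 0)
    (d : ℕ → Fin n → ℝ) (hd : ∀ (r : ℕ) (i : Fin n), d r i = b r i - b (r - 1) i)
    (l : ℕ) (p : Fin n) : ∑ m ∈ Finset.Icc 1 l, d m p = b l p := by
  induction l with
  | zero => simp [hb0]
  | succ l ihl =>
    rw [Finset.sum_Icc_succ_top (by omega : 1 ≤ l + 1), ihl, hd (l+1) p]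
    simp


/-- The difference between the discrete Wick power and its Euler counterpart has Walsh
decomposition
`(1/k!)(B^{H,n}_{l/n})^{⋄ₙk} − (1/k!)U^{k,n}_l
  = Σ_{C⊆{1,…,l},|C|=k} (Σ_{m:C→{1,…,l} not injective} ∏_{p∈C} d^n_{m(p),p}) Ξ^n_C`;
the key identity is that each coordinate sum telescopes: `Σ_{m=1}^l d^n_{m,p} = b^n_{l/n,p}`. -/
theorem stmt10 {n : ℕ} (b : ℕ → Fin n → ℝ)
    (hb0 : ∀ i : Fin n, b 0 i = 0)
    (hbsupp : ∀ (r : ℕ) (i : Fin n), r < (i : ℕ) + 1 → b r i = 0)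
    (d : ℕ → Fin n → ℝ) (hd : ∀ (r : ℕ) (i : Fin n), d r i = b r i - b (r - 1) i)
    (k l : ℕ) (hl : l ≤ n) :
    (∀ p : Fin n, ∑ m ∈ Finset.Icc 1 l, d m p = b l p) ∧
    (∀ C : Finset (Fin n),
      (1 / (k.factorial : ℝ)) * (wickPowC (walkC (b l) l) k C - Ueuler d l k C)
        = if C.card = k ∧ (∀ i ∈ C, (i : ℕ) < l) then
            ∑ m ∈ C.pi (fun _ => Finset.Icc 1 l),
              (if ¬ (∀ (p : Fin n) (hp : p ∈ C) (q : Fin n) (hq : q ∈ C),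
                    m p hp = m q hq → p = q)
               then ∏ p ∈ C.attach, d (m p.1 p.2) p.1 else 0)
          else 0) := by
  classical
  refine ⟨telescope b hb0 d hd l, fun C => ?_⟩
  have hk : (k.factorial : ℝ) ≠ 0 := by exact_mod_cast k.factorial_ne_zero
  rw [walkC_eq_lin (b l) l, wickPowC_lin, Ueuler_eq]
  by_cases h1 : C.card = k
  · by_cases h2 : ∀ i ∈ C, (i : ℕ) < l
    · rw [if_pos h1, if_pos h1, if_pos ⟨h1, h2⟩]
      have hprodc : ∏ p ∈ C, (if (p : ℕ) < l then b l p else 0) = ∏ p ∈ C, b l p :=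
        Finset.prod_congr rfl fun p hp => if_pos (h2 p hp)
      rw [hprodc]
      have hsplit : ∏ p ∈ C, b l p
          = Stot d l C + ∑ f ∈ pifun C (Finset.Icc 1 l),
              (if ¬ Set.InjOn f ↑C then ∏ p ∈ C, d (f p) p else 0) := by
        have hbt : ∏ p ∈ C, b l p = ∏ p ∈ C, ∑ m ∈ Finset.Icc 1 l, d m p :=
          Finset.prod_congr rfl fun p _ => (telescope b hb0 d hd l p).symm
        rw [hbt, ← sum_pifun_prod d l C, Stot, ← Finset.sum_add_distrib]
        refine Finset.sum_congr rfl fun f _ => ?_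
        by_cases h : Set.InjOn f ↑C <;> simp [h]
      have hR : (∑ m ∈ C.pi (fun _ => Finset.Icc 1 l),
            (if ¬ (∀ (p : Fin n) (hp : p ∈ C) (q : Fin n) (hq : q ∈ C),
                  m p hp = m q hq → p = q)
             then ∏ p ∈ C.attach, d (m p.1 p.2) p.1 else 0))
          = ∑ f ∈ pifun C (Finset.Icc 1 l),
              (if ¬ Set.InjOn f ↑C then ∏ p ∈ C, d (f p) p else 0) := by
        rw [sum_pi_eq C (Finset.Icc 1 l)
          (fun m => if ¬ (∀ (p : Fin n) (hp : p ∈ C) (q : Fin n) (hq : q ∈ C),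
              m p hp = m q hq → p = q)
            then ∏ p ∈ C.attach, d (m p.1 p.2) p.1 else 0)]
        refine Finset.sum_congr rfl fun f _ => ?_
        dsimp only
        have hiff : (∀ (p : Fin n) (_ : p ∈ C) (q : Fin n) (_ : q ∈ C), f p = f q → p = q)
            ↔ Set.InjOn f ↑C :=
          ⟨fun h p hp q hq e => h p (Finset.mem_coe.1 hp) q (Finset.mem_coe.1 hq) e,
           fun h p hp q hq e => h (Finset.mem_coe.2 hp) (Finset.mem_coe.2 hq) e⟩
        exact if_congr (not_congr hiff) (Finset.prod_attach C (fun p => d (f p) p)) rfl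
      rw [hR, hsplit]
      field_simp
      ring
    · rw [if_pos h1, if_pos h1, if_neg (fun h => h2 h.2)]
      have hc0 : ∏ p ∈ C, (if (p : ℕ) < l then b l p else 0) = 0 := by
        push_neg at h2
        obtain ⟨i, hi, hni⟩ := h2
        exact Finset.prod_eq_zero hi (if_neg (by omega))
      have hS0 : Stot d l C = 0 := by
        push_neg at h2
        obtain ⟨i, hi, hni⟩ := h2
        refine Finset.sum_eq_zero fun f hf => ?_
        have hfi : f i ∈ Finset.Icc 1 l := by
          have := Fintype.mem_piFinset.1 hf i
          rwa [if_pos hi] at this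
        rw [Finset.mem_Icc] at hfi
        have hdz : d (f i) i = 0 := by
          rw [hd, hbsupp (f i) i (by omega), hbsupp (f i - 1) i (by omega), sub_zero]
        split_ifs with h
        · exact Finset.prod_eq_zero hi hdz
        · rfl
      simp [hc0, hS0]
  · rw [if_neg h1, if_neg h1, if_neg (fun h => h1 h.1)]
    simp
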